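/- Let g be a finite-dimensional semisimple Lie algebra over ℂ with Killing form ⟨·,·⟩, and let r = Σᵢ aᵢ ⊗ bᵢ ∈ g ⊗ g be a skew-symmetric solution of the classical Yang–Baxter equation [r₁₂,r₁₃] + [r₁₂,r₂₃] + [r₁₃,r₂₃] = 0. Then the linear map R: g → g defined by R(x) = Σᵢ ⟨aᵢ,x⟩ bᵢ is a Rota–Baxter operator of weight 0 on g. -/

import Mathlib

open TensorProduct


section Aux
variable {g : Type*} [LieRing g] [LieAlgebra ℂ g] [FiniteDimensional ℂ g]

local notation "U" => UniversalEnvelopingAlgebra ℂ g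
local notation "ιU" => UniversalEnvelopingAlgebra.ι ℂ (L := g)

/-- the representation of U on g induced by ad -/
noncomputable def cybeRho : U →ₐ[ℂ] Module.End ℂ g :=
  UniversalEnvelopingAlgebra.lift ℂ (LieAlgebra.ad ℂ g)

@[simp] lemma cybeRho_ι (w : g) : cybeRho (ιU w) = LieAlgebra.ad ℂ g w :=
  UniversalEnvelopingAlgebra.lift_ι_apply ℂ _ w

/-- a linear functional on U extending the Killing pairing with z -/
noncomputable def cybeF (z : g) : U →ₗ[ℂ] ℂ :=
  (LinearMap.trace ℂ g) ∘ₗ (LinearMap.mulRight ℂ (LieAlgebra.ad ℂ g z)) ∘ₗ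
    (cybeRho (g := g)).toLinearMap

@[simp] lemma cybeF_ι (z w : g) : cybeF z (ιU w) = killingForm ℂ g w z := by
  simp only [cybeF, LinearMap.coe_comp, Function.comp_apply, AlgHom.toLinearMap_apply,
    cybeRho_ι, LinearMap.mulRight_apply, killingForm_apply_apply, Module.End.mul_eq_comp]


/-- the evaluation map `u ⊗ v ⊗ w ↦ ⟨u,x⟩⟨v,y⟩ ρ(w)` -/
noncomputable def cybePhi (x y : g) : U ⊗[ℂ] (U ⊗[ℂ] U) →ₗ[ℂ] Module.End ℂ g :=
  TensorProduct.lift <| LinearMap.mk₂ ℂ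
    (fun u t => cybeF x u • (TensorProduct.lift <| LinearMap.mk₂ ℂ
        (fun v w => cybeF y v • cybeRho w)
        (fun m n w => by simp [add_smul])
        (fun c m w => by simp [mul_smul])
        (fun m n₁ n₂ => by simp)
        (fun c m n => by simp [smul_comm c])) t)
    (fun m n t => by simp [add_smul])
    (fun c m t => by simp [mul_smul])
    (fun m t₁ t₂ => by simp)
    (fun c m t => by simp [smul_comm c])

@[simp] lemma cybePhi_tmul (x y : g) (u v w : U) :
    cybePhi x y (u ⊗ₜ (v ⊗ₜ w)) = cybeF x u • cybeF y v • cybeRho w := by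
  simp [cybePhi]


variable {κ : Type*}

lemma cybe_lie12_13 (s : Finset κ) (a b : κ → g) :
    ⁅∑ i ∈ s, ιU (a i) ⊗ₜ[ℂ] (ιU (b i) ⊗ₜ[ℂ] (1 : U)),
     ∑ i ∈ s, ιU (a i) ⊗ₜ[ℂ] ((1 : U) ⊗ₜ[ℂ] ιU (b i))⁆ =
    ∑ i ∈ s, ∑ j ∈ s, ιU ⁅a i, a j⁆ ⊗ₜ[ℂ] (ιU (b i) ⊗ₜ[ℂ] ιU (b j)) := by
  simp only [Ring.lie_def, Finset.sum_mul_sum, Algebra.TensorProduct.tmul_mul_tmul,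
    one_mul, mul_one, LieHom.map_lie, sub_tmul, tmul_sub, Finset.sum_sub_distrib]
  congr 1
  rw [Finset.sum_comm]

lemma cybe_lie12_23 (s : Finset κ) (a b : κ → g) :
    ⁅∑ i ∈ s, ιU (a i) ⊗ₜ[ℂ] (ιU (b i) ⊗ₜ[ℂ] (1 : U)),
     ∑ i ∈ s, (1 : U) ⊗ₜ[ℂ] (ιU (a i) ⊗ₜ[ℂ] ιU (b i))⁆ =
    ∑ i ∈ s, ∑ j ∈ s, ιU (a i) ⊗ₜ[ℂ] (ιU ⁅b i, a j⁆ ⊗ₜ[ℂ] ιU (b j)) := by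
  simp only [Ring.lie_def, Finset.sum_mul_sum, Algebra.TensorProduct.tmul_mul_tmul,
    one_mul, mul_one, LieHom.map_lie, sub_tmul, tmul_sub, Finset.sum_sub_distrib]
  congr 1
  rw [Finset.sum_comm]

lemma cybe_lie13_23 (s : Finset κ) (a b : κ → g) :
    ⁅∑ i ∈ s, ιU (a i) ⊗ₜ[ℂ] ((1 : U) ⊗ₜ[ℂ] ιU (b i)),
     ∑ i ∈ s, (1 : U) ⊗ₜ[ℂ] (ιU (a i) ⊗ₜ[ℂ] ιU (b i))⁆ =
    ∑ i ∈ s, ∑ j ∈ s, ιU (a i) ⊗ₜ[ℂ] (ιU (a j) ⊗ₜ[ℂ] ιU ⁅b i, b j⁆) := by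
  simp only [Ring.lie_def, Finset.sum_mul_sum, Algebra.TensorProduct.tmul_mul_tmul,
    one_mul, mul_one, LieHom.map_lie, sub_tmul, tmul_sub, Finset.sum_sub_distrib]
  congr 1
  rw [Finset.sum_comm]


lemma cybe_sum_lie (s : Finset κ) (f : κ → g) (z : g) :
    ⁅∑ i ∈ s, f i, z⁆ = ∑ i ∈ s, ⁅f i, z⁆ := by
  induction s using Finset.cons_induction with
  | empty => simp
  | cons i t hi ih => simp [Finset.sum_cons, add_lie, ih]

lemma cybe_lie_sum (s : Finset κ) (f : κ → g) (z : g) :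
    ⁅z, ∑ i ∈ s, f i⁆ = ∑ i ∈ s, ⁅z, f i⁆ := by
  induction s using Finset.cons_induction with
  | empty => simp
  | cons i t hi ih => simp [Finset.sum_cons, lie_add, ih]

lemma cybe_ad_sum (s : Finset κ) (f : κ → g) :
    LieAlgebra.ad ℂ g (∑ i ∈ s, f i) = ∑ i ∈ s, LieAlgebra.ad ℂ g (f i) := by
  induction s using Finset.cons_induction with
  | empty => simp
  | cons i t hi ih => simp [Finset.sum_cons, ih]

end Aux

/-- A skew-symmetric solution of the classical Yang–Baxter equation on a
finite-dimensional semisimple complex Lie algebra `g` (with brackets computed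
via the universal enveloping algebra) gives rise to a Rota–Baxter operator of
weight 0 via the Killing form: `R(x) = Σ ⟨aᵢ, x⟩ • bᵢ`. -/
theorem cybe_gives_RB_weight_zero {g : Type*} [LieRing g] [LieAlgebra ℂ g]
    [FiniteDimensional ℂ g] [LieAlgebra.IsSemisimple ℂ g]
    {ι : Type*} (s : Finset ι) (a b : ι → g)
    (hskew : (∑ i ∈ s, a i ⊗ₜ[ℂ] b i) = - ∑ i ∈ s, b i ⊗ₜ[ℂ] a i)
    (r12 r13 r23 : UniversalEnvelopingAlgebra ℂ g ⊗[ℂ]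
      (UniversalEnvelopingAlgebra ℂ g ⊗[ℂ] UniversalEnvelopingAlgebra ℂ g))
    (h12 : r12 = ∑ i ∈ s, UniversalEnvelopingAlgebra.ι ℂ (a i) ⊗ₜ
      (UniversalEnvelopingAlgebra.ι ℂ (b i) ⊗ₜ 1))
    (h13 : r13 = ∑ i ∈ s, UniversalEnvelopingAlgebra.ι ℂ (a i) ⊗ₜ
      ((1 : UniversalEnvelopingAlgebra ℂ g) ⊗ₜ UniversalEnvelopingAlgebra.ι ℂ (b i)))
    (h23 : r23 = ∑ i ∈ s, (1 : UniversalEnvelopingAlgebra ℂ g) ⊗ₜ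
      (UniversalEnvelopingAlgebra.ι ℂ (a i) ⊗ₜ UniversalEnvelopingAlgebra.ι ℂ (b i)))
    (hCYBE : ⁅r12, r13⁆ + ⁅r12, r23⁆ + ⁅r13, r23⁆ = 0)
    (R : g →ₗ[ℂ] g) (hR : ∀ x : g, R x = ∑ i ∈ s, killingForm ℂ g (a i) x • b i) :
    ∀ x y : g, ⁅R x, R y⁆ = R (⁅R x, y⁆ + ⁅x, R y⁆) := by
  intro x y
  have hinv : ∀ u v w : g, killingForm ℂ g ⁅u, v⁆ w = killingForm ℂ g u ⁅v, w⁆ := fun u v w =>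
    LieModule.traceForm_apply_lie_apply ℂ g g u v w
  -- consequence of skew-symmetry
  have hs : ∑ i ∈ s, killingForm ℂ g (b i) y • a i = - R y := by
    have h := congrArg (TensorProduct.lift (LinearMap.mk₂ ℂ
        (fun u v : g => killingForm ℂ g v y • u)
        (fun m n v => by simp [smul_add])
        (fun c m v => by simp [smul_comm c])
        (fun m v₁ v₂ => by simp [add_smul])
        (fun c m v => by simp [mul_smul]))) hskew
    simp only [map_sum, map_neg, TensorProduct.lift.tmul, LinearMap.mk₂_apply] at h
    rw [hR y]
    exact h
  -- injectivity of ad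
  have hinj : Function.Injective (LieAlgebra.ad ℂ g) := by
    letI : LieRing (Module.End ℂ g) := LieRing.ofAssociativeRing
    rw [← LieHom.ker_eq_bot]
    exact LieAlgebra.ad_ker_eq_bot_of_hasTrivialRadical ℂ g
  -- the main identity obtained from the CYBE
  have hzero :
      (∑ i ∈ s, ∑ j ∈ s,
        (killingForm ℂ g ⁅a i, a j⁆ x * killingForm ℂ g (b i) y) • b j)
      + (∑ i ∈ s, ∑ j ∈ s,
        (killingForm ℂ g (a i) x * killingForm ℂ g ⁅b i, a j⁆ y) • b j)
      + (∑ i ∈ s, ∑ j ∈ s,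
        (killingForm ℂ g (a i) x * killingForm ℂ g (a j) y) • ⁅b i, b j⁆) = 0 := by
    apply hinj
    rw [map_zero]
    rw [h12, h13, h23, cybe_lie12_13, cybe_lie12_23, cybe_lie13_23] at hCYBE
    have key := congrArg (cybePhi x y) hCYBE
    simp only [map_add, map_sum, map_zero, cybePhi_tmul, cybeF_ι, cybeRho_ι] at key
    simp only [map_add, cybe_ad_sum, map_smul, mul_smul]
    exact key
  -- identification of the three sums
  have e1 : (∑ i ∈ s, ∑ j ∈ s,
      (killingForm ℂ g ⁅a i, a j⁆ x * killingForm ℂ g (b i) y) • b j) = - R ⁅x, R y⁆ := by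
    rw [show (⁅x, R y⁆ : g) = -⁅R y, x⁆ by rw [← lie_skew], map_neg, neg_neg]
    rw [hR ⁅R y, x⁆, Finset.sum_comm]
    refine Finset.sum_congr rfl fun j _ => ?_
    rw [← Finset.sum_smul]
    congr 1
    calc ∑ i ∈ s, killingForm ℂ g ⁅a i, a j⁆ x * killingForm ℂ g (b i) y
        = killingForm ℂ g ⁅∑ i ∈ s, killingForm ℂ g (b i) y • a i, a j⁆ x := by
          rw [cybe_sum_lie]
          simp only [map_sum, LinearMap.coe_sum, Finset.sum_apply, smul_lie, map_smul,
            LinearMap.smul_apply, smul_eq_mul]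
          exact Finset.sum_congr rfl fun i _ => mul_comm _ _
      _ = killingForm ℂ g (a j) ⁅R y, x⁆ := by
          rw [hs, neg_lie, lie_skew, hinv]
  have e2 : (∑ i ∈ s, ∑ j ∈ s,
      (killingForm ℂ g (a i) x * killingForm ℂ g ⁅b i, a j⁆ y) • b j) = - R ⁅R x, y⁆ := by
    rw [hR ⁅R x, y⁆, hR x, cybe_sum_lie, Finset.sum_comm]
    rw [← Finset.sum_neg_distrib]
    refine Finset.sum_congr rfl fun j _ => ?_
    rw [← Finset.sum_smul, ← neg_smul]
    congr 1
    rw [map_sum, ← Finset.sum_neg_distrib]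
    refine Finset.sum_congr rfl fun i _ => ?_
    have hb : killingForm ℂ g ⁅b i, a j⁆ y = -(killingForm ℂ g (a j) ⁅b i, y⁆) := by
      rw [← lie_skew (b i) (a j)]
      simp only [map_neg, LinearMap.neg_apply, hinv]
    rw [hb]
    simp only [smul_lie, map_smul, LinearMap.smul_apply, smul_eq_mul]
    ring
  have e3 : (∑ i ∈ s, ∑ j ∈ s,
      (killingForm ℂ g (a i) x * killingForm ℂ g (a j) y) • ⁅b i, b j⁆) = ⁅R x, R y⁆ := by
    rw [hR x, hR y, Finset.sum_comm]
    simp only [cybe_sum_lie, cybe_lie_sum, smul_lie, lie_smul, Finset.smul_sum, smul_smul]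
    exact Finset.sum_congr rfl fun j _ => Finset.sum_congr rfl fun i _ => by rw [mul_comm]
  rw [e1, e2, e3] at hzero
  rw [map_add]
  have hC := eq_neg_of_add_eq_zero_left hzero
  have hC' : ⁅R x, R y⁆ = -(-R ⁅x, R y⁆ + -R ⁅R x, y⁆) := by rw [hC, neg_neg]
  rw [hC']
  abel
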